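/- Let k ≥ 2 be an integer and let G be an interval graph with n vertices whose maximum clique size is k, such that G contains a Hamiltonian path and n ≥ (k+2)!. Then G contains an induced path of size at least ((log(n/(k+2)!)/log(k+2))^{1/(k−1)} / k)^{1/(k−1)}; in particular, there is a constant c_k > 0 depending only on k such that G contains an induced path of size at least c_k (log n)^{1/(k−1)²}. -/

import Mathlib

open SimpleGraph

/-- `l, r` form an interval representation of `G`: each vertex `v` corresponds to the
interval `[l v, r v]`, all `2n` endpoints are pairwise distinct, and two distinct
vertices are adjacent exactly when their intervals intersect. -/
def IsIntervalRep {V : Type} (G : SimpleGraph V) (l r : V → ℝ) : Prop :=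
  (∀ v, l v ≤ r v) ∧
  (∀ v w, l v = l w → v = w) ∧
  (∀ v w, r v = r w → v = w) ∧
  (∀ v w, l v ≠ r w) ∧
  (∀ v w, v ≠ w → (G.Adj v w ↔ l v ≤ r w ∧ l w ≤ r v))

/-- The maximum clique size of `G` is `k`. -/
def MaxCliqueSize {V : Type} (G : SimpleGraph V) (k : ℕ) : Prop :=
  (∃ S : Finset V, G.IsNClique k S) ∧ ∀ (m : ℕ) (S : Finset V), G.IsNClique m S → m ≤ k

/-- In the left ordering (ordering by `l`) induced on `S`, every vertex of `S` other
than the last is adjacent to its successor: any two elements of `S` that are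
consecutive in the left ordering of `S` are adjacent in `G`. -/
def ConsecAdjOn {V : Type} (G : SimpleGraph V) (l : V → ℝ) (S : Set V) : Prop :=
  ∀ v ∈ S, ∀ w ∈ S, l v < l w → (∀ u ∈ S, ¬(l v < l u ∧ l u < l w)) → G.Adj v w

/-- `G` contains an induced path on `m` vertices. -/
def HasInducedPathOfSize {V : Type} (G : SimpleGraph V) (m : ℕ) : Prop :=
  ∃ S : Set V, S.ncard = m ∧ Nonempty ((G.induce S) ≃g pathGraph m)


attribute [local instance] Classical.propDecidable

namespace IGIP

variable {V : Type}


variable {V : Type}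

/-- Two intervals intersect. -/
def Isect (l r : V → ℝ) (v w : V) : Prop := l v ≤ r w ∧ l w ≤ r v

lemma Isect.symm {l r : V → ℝ} {v w : V} (h : Isect l r v w) : Isect l r w v := ⟨h.2, h.1⟩

lemma Isect.refl {l r : V → ℝ} (hlr : ∀ v, l v ≤ r v) (v : V) : Isect l r v v :=
  ⟨hlr v, hlr v⟩

/-- A chordless (induced) path, as a list. -/
def Chordless (l r : V → ℝ) (L : List V) : Prop :=
  L.Nodup ∧ L.Chain' (Isect l r) ∧
  ∀ (i j : ℕ) (hi : i < L.length) (hj : j < L.length), i + 2 ≤ j →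
    ¬ Isect l r (L.get ⟨i, hi⟩) (L.get ⟨j, hj⟩)

/-- The recursive bound. -/
def fb : ℕ → ℕ → ℕ
  | 0, _ => 0
  | (k+1), m => m * (2*k+3) * (1 + fb k m)

/-- In a chain containing an element satisfying `p` and one not satisfying `p`,
there are two related elements on which `p` differs. -/
lemma chain'_boundary {α : Type*} {R : α → α → Prop} {p : α → Prop} :
    ∀ (L : List α), L.Chain' R → ∀ a ∈ L, ∀ b ∈ L, p a → ¬ p b →
    ∃ u ∈ L, ∃ w ∈ L, R u w ∧ ((p u ∧ ¬ p w) ∨ (¬ p u ∧ p w))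
  | [] => by simp
  | [x] => by
      intro _ a ha b hb hpa hpb
      simp only [List.mem_singleton] at ha hb
      subst ha; subst hb; exact absurd hpa hpb
  | x :: y :: t => by
      intro hc a ha b hb hpa hpb
      have hR : R x y := (List.isChain_cons_cons.mp hc).1
      have hc' : List.Chain' R (y :: t) := (List.isChain_cons_cons.mp hc).2
      by_cases hx : p x
      · by_cases hy : p y
        · have hb' : b ∈ y :: t := by
            rcases List.mem_cons.mp hb with h | h
            · exact absurd (by rwa [h]) hpb
            · exact h
          obtain ⟨u, hu, w, hw, h⟩ := chain'_boundary (y :: t) hc' y (by simp) b hb' hy hpb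
          exact ⟨u, List.mem_cons_of_mem _ hu, w, List.mem_cons_of_mem _ hw, h⟩
        · exact ⟨x, by simp, y, by simp, hR, Or.inl ⟨hx, hy⟩⟩
      · by_cases hy : p y
        · exact ⟨x, by simp, y, by simp, hR, Or.inr ⟨hx, hy⟩⟩
        · have ha' : a ∈ y :: t := by
            rcases List.mem_cons.mp ha with h | h
            · exact absurd (by rwa [h] at hpa) hx
            · exact h
          obtain ⟨u, hu, w, hw, h⟩ := chain'_boundary (y :: t) hc' a ha' y (by simp) hpa hy
          exact ⟨u, List.mem_cons_of_mem _ hu, w, List.mem_cons_of_mem _ hw, h⟩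

/-- A chain of intervals covers the segment from the left end of its head
to the right end of its last element. -/
lemma chain'_cover {l r : V → ℝ} :
    ∀ (P : List V) (hP : P ≠ []), P.Chain' (Isect l r) →
      ∀ x : ℝ, l (P.head hP) ≤ x → x ≤ r (P.getLast hP) → ∃ p ∈ P, l p ≤ x ∧ x ≤ r p
  | [], hP => absurd rfl hP
  | [v], _ => by
      intro _ x h1 h2
      exact ⟨v, by simp, h1, h2⟩
  | v :: w :: t, _ => by
      intro hc x h1 h2
      have hR : Isect l r v w := (List.isChain_cons_cons.mp hc).1
      have hc' : List.Chain' (Isect l r) (w :: t) := (List.isChain_cons_cons.mp hc).2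
      by_cases hxv : x ≤ r v
      · exact ⟨v, by simp, h1, hxv⟩
      · have hlw : l ((w :: t).head (by simp)) ≤ x := le_trans hR.2 (le_of_not_ge hxv)
        have h2' : x ≤ r ((w :: t).getLast (by simp)) := by
          rwa [List.getLast_cons (by simp : w :: t ≠ [])] at h2
        obtain ⟨p, hp, h⟩ := chain'_cover (w :: t) (by simp) hc' x hlw h2'
        exact ⟨p, List.mem_cons_of_mem _ hp, h⟩


lemma dropWhile_head_not {α : Type*} (p : α → Bool) :
    ∀ (L : List α) (c : α) (t : List α), L.dropWhile p = c :: t → ¬ p c = true := by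
  intro L
  induction L with
  | nil => intro c t h; simp [List.dropWhile] at h
  | cons a L ihL =>
    intro c t h
    by_cases ha : p a = true
    · rw [List.dropWhile_cons_of_pos ha] at h
      exact ihL c t h
    · rw [List.dropWhile_cons_of_neg ha] at h
      rw [← (List.cons.injEq ..).mp h |>.1]
      exact ha


theorem core (l r : V → ℝ) (hlr : ∀ v, l v ≤ r v)
    (injl : ∀ v w : V, l v = l w → v = w) (injr : ∀ v w : V, r v = r w → v = w) :
    ∀ (k m : ℕ) (A : Finset V) (L : List V), L.Nodup → L.toFinset = A →
      L.Chain' (Isect l r) →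
      (∀ x : ℝ, (A.filter fun v => l v ≤ x ∧ x ≤ r v).card ≤ k) →
      (∀ C : List V, Chordless l r C → (∀ x ∈ C, x ∈ A) → C.length ≤ m) →
      A.card ≤ fb k m := by
  intro k
  induction k with
  | zero =>
    intro m A L hnd htf hch hdep hcl
    rcases Finset.eq_empty_or_nonempty A with he | ⟨v, hv⟩
    · simp [he, fb]
    · exfalso
      have hv' : v ∈ A.filter fun w => l w ≤ l v ∧ l v ≤ r w :=
        Finset.mem_filter.mpr ⟨hv, le_refl _, hlr v⟩
      have := Finset.card_pos.mpr ⟨v, hv'⟩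
      have := hdep (l v)
      omega
  | succ k ih =>
    intro m A L hnd htf hch hdep hcl
    rcases Finset.eq_empty_or_nonempty A with he | hAne
    · simp [he]
    -- step lemma
    have hstep : ∀ v ∈ A, (∃ w ∈ A, r v < r w) → ∃ u ∈ A, Isect l r v u ∧ r v < r u := by
      intro v hv hex
      obtain ⟨w, hw, hrw⟩ := hex
      set B' := A.filter (fun u => r v < r u) with hB'
      have hB'ne : B'.Nonempty := ⟨w, Finset.mem_filter.mpr ⟨hw, hrw⟩⟩
      obtain ⟨u, hu, humin⟩ := Finset.exists_min_image B' l hB'ne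
      have huA : u ∈ A := (Finset.mem_filter.mp hu).1
      have hru : r v < r u := (Finset.mem_filter.mp hu).2
      by_cases hlu : l u ≤ r v
      · exact ⟨u, huA, ⟨le_trans (hlr v) (le_of_lt hru), hlu⟩, hru⟩
      · exfalso
        push_neg at hlu
        have hvL : v ∈ L := by rw [← htf] at hv; exact List.mem_toFinset.mp hv
        have hwL : w ∈ L := by rw [← htf] at hw; exact List.mem_toFinset.mp hw
        obtain ⟨u₁, hu₁, w₁, hw₁, hR, hcase⟩ :=
          chain'_boundary (p := fun a => r a ≤ r v) L hch v hvL w hwL (le_refl _) (not_le.mpr hrw)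
        have hu₁A : u₁ ∈ A := by rw [← htf]; exact List.mem_toFinset.mpr hu₁
        have hw₁A : w₁ ∈ A := by rw [← htf]; exact List.mem_toFinset.mpr hw₁
        rcases hcase with ⟨h1, h2⟩ | ⟨h1, h2⟩
        · push_neg at h2
          have hl1 : l u ≤ l w₁ := humin w₁ (Finset.mem_filter.mpr ⟨hw₁A, h2⟩)
          exact absurd hR.2 (not_le.mpr (lt_of_le_of_lt h1 (lt_of_lt_of_le hlu hl1)))
        · push_neg at h1
          have hl1 : l u ≤ l u₁ := humin u₁ (Finset.mem_filter.mpr ⟨hu₁A, h1⟩)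
          exact absurd hR.1 (not_le.mpr (lt_of_le_of_lt h2 (lt_of_lt_of_le hlu hl1)))
    -- greedy growth
    have hgrow : ∀ (N : ℕ) (v : V), v ∈ A → (A.filter fun w => r v < r w).card ≤ N →
        ∃ (P : List V) (hP : P ≠ []), (∀ p ∈ P, p ∈ A) ∧ P.head hP = v ∧
          P.Chain' (Isect l r) ∧ P.Pairwise (fun a b => r a < r b) ∧
          P.Chain' (fun a b => ∀ u ∈ A, Isect l r a u → r u ≤ r b) ∧
          (∀ w ∈ A, r w ≤ r (P.getLast hP)) := by
      intro N
      induction N with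
      | zero =>
        intro v hv hcard
        by_cases hmax : ∀ w ∈ A, r w ≤ r v
        · refine ⟨[v], by simp, by simp [hv], by simp, List.isChain_singleton _, by simp, List.isChain_singleton _, ?_⟩
          simpa using hmax
        · push_neg at hmax
          obtain ⟨w, hw, hrw⟩ := hmax
          have h1 : w ∈ A.filter fun w => r v < r w := Finset.mem_filter.mpr ⟨hw, hrw⟩
          have := Finset.card_pos.mpr ⟨w, h1⟩
          omega
      | succ N ihN =>
        intro v hv hcard
        by_cases hmax : ∀ w ∈ A, r w ≤ r v
        · refine ⟨[v], by simp, by simp [hv], by simp, List.isChain_singleton _, by simp, List.isChain_singleton _, ?_⟩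
          simpa using hmax
        · push_neg at hmax
          obtain ⟨w, hw, hrw⟩ := hmax
          obtain ⟨u0, hu0, hiu0, hru0⟩ := hstep v hv ⟨w, hw, hrw⟩
          set NB := A.filter (fun u => Isect l r v u) with hNB
          have hNBne : NB.Nonempty := ⟨u0, Finset.mem_filter.mpr ⟨hu0, hiu0⟩⟩
          obtain ⟨u, hu, humax⟩ := Finset.exists_max_image NB r hNBne
          have huA : u ∈ A := (Finset.mem_filter.mp hu).1
          have hiu : Isect l r v u := (Finset.mem_filter.mp hu).2
          have hru : r v < r u := lt_of_lt_of_le hru0 (humax u0 (Finset.mem_filter.mpr ⟨hu0, hiu0⟩))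
          have hmeas : (A.filter fun w => r u < r w).card ≤ N := by
            have hss : (A.filter fun w => r u < r w) ⊂ (A.filter fun w => r v < r w) := by
              constructor
              · intro z hz
                have hz' := Finset.mem_filter.mp hz
                exact Finset.mem_filter.mpr ⟨hz'.1, lt_trans hru hz'.2⟩
              · intro hsub
                have : u ∈ A.filter fun w => r u < r w :=
                  hsub (Finset.mem_filter.mpr ⟨huA, hru⟩)
                exact absurd (Finset.mem_filter.mp this).2 (lt_irrefl _)
            have := Finset.card_lt_card hss
            omega
          obtain ⟨P', hP', hPA', hhead', hch', hpw', hgr', hlast'⟩ := ihN u huA hmeas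
          refine ⟨v :: P', by simp, ?_, by simp, ?_, ?_, ?_, ?_⟩
          · intro p hp
            rcases List.mem_cons.mp hp with h | h
            · exact h ▸ hv
            · exact hPA' p h
          · refine List.isChain_cons.mpr ?_
            refine ⟨?_, hch'⟩
            intro y hy
            rw [List.head?_eq_head hP'] at hy
            simp only [Option.mem_def, Option.some.injEq] at hy
            rw [← hy, hhead']
            exact hiu
          · rw [List.pairwise_cons]
            refine ⟨?_, hpw'⟩
            intro b hb
            have hb' : r u ≤ r b := by
              have hPd : P' = P'.head hP' :: P'.tail := (List.cons_head_tail hP').symm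
              rw [hPd] at hb hpw'
              rcases List.mem_cons.mp hb with h | h
              · rw [h, hhead']
              · exact le_of_lt ((List.pairwise_cons.mp hpw').1 b h) |>.trans_eq' (by rw [hhead'])
            exact lt_of_lt_of_le hru hb'
          · refine List.isChain_cons.mpr ?_
            refine ⟨?_, hgr'⟩
            intro y hy
            rw [List.head?_eq_head hP'] at hy
            simp only [Option.mem_def, Option.some.injEq] at hy
            rw [← hy, hhead']
            intro z hz hiz
            exact humax z (Finset.mem_filter.mpr ⟨hz, hiz⟩)
          · rw [List.getLast_cons hP']
            exact hlast'
    -- build the spine P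
    obtain ⟨v₁, hv₁, hv₁min⟩ := Finset.exists_min_image A l hAne
    obtain ⟨P, hPne, hPA, hPhead, hPch, hPpw, hPgr, hPlast⟩ :=
      hgrow ((A.filter fun w => r v₁ < r w).card) v₁ hv₁ (le_refl _)
    have hPnd : P.Nodup := hPpw.imp (fun h => ne_of_apply_ne r (ne_of_lt h))
    have hPchord : Chordless l r P := by
      refine ⟨hPnd, hPch, ?_⟩
      intro i j hi hj hij hIs
      have hgr' := List.isChain_iff_getElem.mp hPgr i (by omega)
      have h1 : r (P.get ⟨j, hj⟩) ≤ r (P.get ⟨i+1, by omega⟩) :=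
        hgr' (P.get ⟨j, hj⟩) (hPA _ (List.get_mem ..)) hIs
      have h2 : r (P.get ⟨i+1, by omega⟩) < r (P.get ⟨j, hj⟩) :=
        List.pairwise_iff_get.mp hPpw ⟨i+1, by omega⟩ ⟨j, hj⟩ (by simp; omega)
      exact absurd h1 (not_le.mpr h2)
    have hs : P.length ≤ m := hcl P hPchord hPA
    have hcov : ∀ a ∈ A, ∃ p ∈ P, l p ≤ l a ∧ l a ≤ r p := by
      intro a ha
      apply chain'_cover P hPne hPch (l a)
      · rw [hPhead]; exact hv₁min a ha
      · exact le_trans (hlr a) (hPlast a ha)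
    -- counting vertices nested strictly inside a spine interval
    have hinside : ∀ p0 ∈ A, (A.filter fun a => l p0 < l a ∧ r a < r p0).card ≤ (2*k+3) * fb k m := by
      intro p0 hp0
      set B := A.filter (fun a => l p0 < l a ∧ r a < r p0) with hBdef
      have hBsub : B ⊆ A := Finset.filter_subset _ _
      have hp0B : p0 ∉ B := by
        intro h; exact absurd (Finset.mem_filter.mp h).2.1 (lt_irrefl _)
      set pB : V → Bool := fun a => decide (a ∈ B) with hpB
      set pD : V → Bool := fun c => decide (c ∉ B ∧
        ((l c ≤ l p0 ∧ l p0 ≤ r c) ∨ (l c ≤ r p0 ∧ r p0 ≤ r c))) with hpD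
      -- any nodup chain inside B has length ≤ fb k m (by the induction hypothesis)
      have hblock : ∀ (t : List V), (∀ x ∈ t, x ∈ B) → t.Nodup → t.Chain' (Isect l r) →
          t.length ≤ fb k m := by
        intro t htB htnd htch
        have hdep' : ∀ x : ℝ, (t.toFinset.filter fun v => l v ≤ x ∧ x ≤ r v).card ≤ k := by
          intro x
          rcases Finset.eq_empty_or_nonempty (t.toFinset.filter fun v => l v ≤ x ∧ x ≤ r v)
            with he | ⟨b, hb⟩
          · simp [he]
          · have hb' := Finset.mem_filter.mp hb
            have hbB : b ∈ B := htB b (List.mem_toFinset.mp hb'.1)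
            have hbm := Finset.mem_filter.mp hbB
            have hp0x : p0 ∈ A.filter fun v => l v ≤ x ∧ x ≤ r v :=
              Finset.mem_filter.mpr ⟨hp0, le_trans (le_of_lt hbm.2.1) hb'.2.1,
                le_trans hb'.2.2 (le_of_lt hbm.2.2)⟩
            have hsub2 : (t.toFinset.filter fun v => l v ≤ x ∧ x ≤ r v) ⊆
                (A.filter fun v => l v ≤ x ∧ x ≤ r v).erase p0 := by
              intro z hz
              have hz' := Finset.mem_filter.mp hz
              have hzB : z ∈ B := htB z (List.mem_toFinset.mp hz'.1)
              refine Finset.mem_erase.mpr ⟨?_, Finset.mem_filter.mpr ⟨hBsub hzB, hz'.2⟩⟩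
              intro hzp; rw [hzp] at hzB; exact hp0B hzB
            have hcc := Finset.card_le_card hsub2
            rw [Finset.card_erase_of_mem hp0x] at hcc
            have := hdep x
            omega
        have hres := ih m (t.toFinset) t htnd rfl htch hdep'
          (fun C hC hCt => hcl C hC (fun x hx => hBsub (htB x (List.mem_toFinset.mp (hCt x hx)))))
        rwa [List.toFinset_card_of_nodup htnd] at hres
      -- run decomposition along the hamiltonian list
      have hruns : ∀ (n : ℕ) (L' : List V), L'.length ≤ n → (∀ x ∈ L', x ∈ A) → L'.Nodup →
          L'.Chain' (Isect l r) →
          (L'.filter pB).length ≤ fb k m * (1 + (L'.filter pD).length) := by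
        intro n
        induction n with
        | zero =>
          intro L' hlen _ _ _
          have : L' = [] := List.length_eq_zero_iff.mp (Nat.le_zero.mp hlen)
          subst this; simp
        | succ n ihn =>
          intro L' hlen hmem hnd' hch'
          set t := L'.takeWhile pB with ht
          set d := L'.dropWhile pB with hd
          have htd : t ++ d = L' := List.takeWhile_append_dropWhile (p := pB) (l := L')
          have htB : ∀ x ∈ t, x ∈ B := by
            intro x hx
            have h := List.mem_takeWhile_imp (p := pB) (l := L') (ht ▸ hx)
            simpa [hpB] using h
          have htpre : t <+: L' := List.takeWhile_prefix pB
          have htnd : t.Nodup := htpre.sublist.nodup hnd'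
          have htch : t.Chain' (Isect l r) := hch'.prefix htpre
          have htlen : t.length ≤ fb k m := hblock t htB htnd htch
          have hfB : L'.filter pB = t ++ d.filter pB := by
            conv_lhs => rw [← htd]
            rw [List.filter_append,
              List.filter_eq_self.mpr (fun a ha => decide_eq_true (htB a ha))]
          have hfD : L'.filter pD = d.filter pD := by
            conv_lhs => rw [← htd]
            rw [List.filter_append, List.filter_eq_nil_iff.mpr, List.nil_append]
            intro a ha
            simp only [hpD, decide_eq_true_eq, not_and]
            intro hc
            exact absurd (htB a ha) hc
          cases hdd : d with
          | nil =>
            rw [hfB, hdd]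
            simp only [List.filter_nil, List.append_nil]
            calc t.length ≤ fb k m * 1 := by simpa using htlen
              _ ≤ fb k m * (1 + (L'.filter pD).length) := Nat.mul_le_mul_left _ (by omega)
          | cons c L₃ =>
            have hcnB : c ∉ B := by
              have := dropWhile_head_not pB L' c L₃ (by rw [← hd, hdd])
              simpa [hpB] using this
            have hdsuf : d <:+ L' := List.dropWhile_suffix pB
            have hdnd : d.Nodup := hdsuf.sublist.nodup hnd'
            have hdch : d.Chain' (Isect l r) := hch'.suffix hdsuf
            have hdmem : ∀ x ∈ d, x ∈ A := fun x hx => hmem x (hdsuf.sublist.mem hx)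
            have hL₃nd : L₃.Nodup := by rw [hdd] at hdnd; exact (List.nodup_cons.mp hdnd).2
            have hL₃ch : L₃.Chain' (Isect l r) := by
              rw [hdd] at hdch; exact (List.isChain_cons.mp hdch).2
            have hL₃mem : ∀ x ∈ L₃, x ∈ A := fun x hx =>
              hdmem x (by rw [hdd]; exact List.mem_cons_of_mem _ hx)
            have hL₃len : L₃.length ≤ n := by
              have := congrArg List.length htd
              rw [List.length_append, hdd] at this
              simp at this
              omega
            have ih3 := ihn L₃ hL₃len hL₃mem hL₃nd hL₃ch
            have hfB' : (L'.filter pB).length = t.length + (L₃.filter pB).length := by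
              rw [hfB, hdd, List.filter_cons_of_neg (by simpa [hpB] using hcnB),
                List.length_append]
            by_cases htnil : t = []
            · -- t = [] : no transition needed
              have hfD' : (L₃.filter pD).length ≤ (L'.filter pD).length := by
                rw [hfD, hdd, List.filter_cons]
                cases hpDc : pD c
                · simp
                · simp
              rw [hfB', htnil]
              simp only [List.length_nil, Nat.zero_add]
              calc (L₃.filter pB).length ≤ fb k m * (1 + (L₃.filter pD).length) := ih3
                _ ≤ fb k m * (1 + (L'.filter pD).length) :=
                    Nat.mul_le_mul_left _ (by omega)
            · have htne : t ≠ [] := htnil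
              set b := t.getLast htne with hb
              have hbB : b ∈ B := htB b (List.getLast_mem htne)
              have hIbc : Isect l r b c := by
                have hch'' : List.Chain' (Isect l r) (t ++ c :: L₃) := by
                  rw [← hdd, htd]; exact hch'
                have h3 := (List.isChain_append.mp hch'').2.2
                apply h3
                · rw [List.getLast?_eq_getLast htne]; rfl
                · rfl
              have hbm := Finset.mem_filter.mp hbB
              have hcA : c ∈ A := hdmem c (by rw [hdd]; exact List.mem_cons_self ..)
              have hcD : pD c = true := by
                apply decide_eq_true
                refine ⟨hcnB, ?_⟩
                have hnB' : ¬ (l p0 < l c ∧ r c < r p0) := by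
                  intro hcon
                  exact hcnB (Finset.mem_filter.mpr ⟨hcA, hcon⟩)
                rcases not_and_or.mp hnB' with h | h
                · left
                  exact ⟨le_of_not_gt h, le_trans (le_of_lt hbm.2.1) hIbc.1⟩
                · right
                  exact ⟨le_trans hIbc.2 (le_of_lt hbm.2.2), le_of_not_gt h⟩
              have hfD' : (L'.filter pD).length = 1 + (L₃.filter pD).length := by
                rw [hfD, hdd, List.filter_cons_of_pos hcD]
                simp [Nat.add_comm]
              rw [hfB', hfD']
              calc t.length + (L₃.filter pB).length
                  ≤ fb k m + fb k m * (1 + (L₃.filter pD).length) := add_le_add htlen ih3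
                _ = fb k m * (1 + (1 + (L₃.filter pD).length)) := by ring
      -- assemble the inside bound
      have hrun := hruns L.length L (le_refl _)
        (fun x hx => by rw [← htf]; exact List.mem_toFinset.mpr hx) hnd hch
      have hBcard : B.card ≤ (L.filter pB).length := by
        have h1 : (L.filter pB).toFinset = B := by
          ext z
          simp only [List.mem_toFinset, List.mem_filter, hpB, decide_eq_true_eq]
          constructor
          · exact fun h => h.2
          · intro h
            refine ⟨?_, h⟩
            rw [← List.mem_toFinset, htf]
            exact hBsub h
        calc B.card = (L.filter pB).toFinset.card := by rw [h1]
          _ ≤ (L.filter pB).length := List.toFinset_card_le _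
      have hDlen : (L.filter pD).length ≤ 2*k+2 := by
        have hnd2 : (L.filter pD).Nodup := hnd.filter pD
        have hsub3 : (L.filter pD).toFinset ⊆
            (A.filter fun v => l v ≤ l p0 ∧ l p0 ≤ r v) ∪
            (A.filter fun v => l v ≤ r p0 ∧ r p0 ≤ r v) := by
          intro z hz
          have hz' := List.mem_filter.mp (List.mem_toFinset.mp hz)
          have hzA : z ∈ A := by rw [← htf]; exact List.mem_toFinset.mpr hz'.1
          have hzp := of_decide_eq_true hz'.2
          rcases hzp.2 with h | h
          · exact Finset.mem_union_left _ (Finset.mem_filter.mpr ⟨hzA, h⟩)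
          · exact Finset.mem_union_right _ (Finset.mem_filter.mpr ⟨hzA, h⟩)
        calc (L.filter pD).length = (L.filter pD).toFinset.card :=
              (List.toFinset_card_of_nodup hnd2).symm
          _ ≤ ((A.filter fun v => l v ≤ l p0 ∧ l p0 ≤ r v) ∪
              (A.filter fun v => l v ≤ r p0 ∧ r p0 ≤ r v)).card := Finset.card_le_card hsub3
          _ ≤ _ := Finset.card_union_le _ _
          _ ≤ 2*k+2 := by
              have := hdep (l p0)
              have := hdep (r p0)
              omega
      calc B.card ≤ (L.filter pB).length := hBcard
        _ ≤ fb k m * (1 + (L.filter pD).length) := hrun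
        _ ≤ fb k m * (1 + (2*k+2)) := Nat.mul_le_mul_left _ (by omega)
        _ = (2*k+3) * fb k m := by ring
    -- final assembly
    set Ps := P.toFinset with hPs
    set Bdry := A.filter (fun a => ∃ p ∈ Ps,
      (l a ≤ l p ∧ l p ≤ r a) ∨ (l a ≤ r p ∧ r p ≤ r a)) with hBdry
    set Ins : V → Finset V := fun p => A.filter (fun a => l p < l a ∧ r a < r p) with hIns
    have hsub : A ⊆ Ps ∪ Bdry ∪ Ps.biUnion Ins := by
      intro a ha
      obtain ⟨p, hpP, h1, h2⟩ := hcov a ha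
      have hpPs : p ∈ Ps := List.mem_toFinset.mpr hpP
      by_cases hap : a = p
      · exact Finset.mem_union_left _ (Finset.mem_union_left _ (hap ▸ hpPs))
      by_cases hbd : a ∈ Bdry
      · exact Finset.mem_union_left _ (Finset.mem_union_right _ hbd)
      · refine Finset.mem_union_right _ (Finset.mem_biUnion.mpr ⟨p, hpPs, ?_⟩)
        refine Finset.mem_filter.mpr ⟨ha, lt_of_le_of_ne h1 ?_, ?_⟩
        · intro heq; exact hap (injl p a heq).symm
        · by_contra hr
          push_neg at hr
          exact hbd (Finset.mem_filter.mpr ⟨ha, p, hpPs, Or.inr ⟨h2, hr⟩⟩)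
    have c1 : Ps.card ≤ m := le_trans (List.toFinset_card_le P) hs
    have cB : Bdry.card ≤ m * (2*k+2) := by
      have hsub4 : Bdry ⊆ Ps.biUnion (fun p =>
          (A.filter fun a => l a ≤ l p ∧ l p ≤ r a) ∪
          (A.filter fun a => l a ≤ r p ∧ r p ≤ r a)) := by
        intro a ha
        have ha' := Finset.mem_filter.mp ha
        obtain ⟨p, hpP, h⟩ := ha'.2
        refine Finset.mem_biUnion.mpr ⟨p, hpP, ?_⟩
        rcases h with h | h
        · exact Finset.mem_union_left _ (Finset.mem_filter.mpr ⟨ha'.1, h⟩)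
        · exact Finset.mem_union_right _ (Finset.mem_filter.mpr ⟨ha'.1, h⟩)
      calc Bdry.card ≤ _ := Finset.card_le_card hsub4
        _ ≤ ∑ p ∈ Ps, ((A.filter fun a => l a ≤ l p ∧ l p ≤ r a) ∪
              (A.filter fun a => l a ≤ r p ∧ r p ≤ r a)).card := Finset.card_biUnion_le
        _ ≤ Ps.card * (2*k+2) := by
            rw [← smul_eq_mul]
            apply Finset.sum_le_card_nsmul
            intro p hpPs
            calc ((A.filter fun a => l a ≤ l p ∧ l p ≤ r a) ∪
                  (A.filter fun a => l a ≤ r p ∧ r p ≤ r a)).card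
                ≤ _ := Finset.card_union_le _ _
              _ ≤ 2*k+2 := by
                  have := hdep (l p)
                  have := hdep (r p)
                  omega
        _ ≤ m * (2*k+2) := Nat.mul_le_mul_right _ c1
    have cI : (Ps.biUnion Ins).card ≤ m * ((2*k+3) * fb k m) := by
      calc (Ps.biUnion Ins).card ≤ ∑ p ∈ Ps, (Ins p).card := Finset.card_biUnion_le
        _ ≤ Ps.card * ((2*k+3) * fb k m) := by
            rw [← smul_eq_mul]
            apply Finset.sum_le_card_nsmul
            intro p hpPs
            exact hinside p (hPA p (List.mem_toFinset.mp hpPs))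
        _ ≤ m * ((2*k+3) * fb k m) := Nat.mul_le_mul_right _ c1
    have : A.card ≤ m + m * (2*k+2) + m * ((2*k+3) * fb k m) := by
      calc A.card ≤ (Ps ∪ Bdry ∪ Ps.biUnion Ins).card := Finset.card_le_card hsub
        _ ≤ (Ps ∪ Bdry).card + (Ps.biUnion Ins).card := Finset.card_union_le _ _
        _ ≤ Ps.card + Bdry.card + (Ps.biUnion Ins).card := by
            have := Finset.card_union_le Ps Bdry
            omega
        _ ≤ m + m * (2*k+2) + m * ((2*k+3) * fb k m) := by
            have := c1; have := cB; have := cI; omega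
    calc A.card ≤ m + m * (2*k+2) + m * ((2*k+3) * fb k m) := this
      _ = m * (2*k+3) * (1 + fb k m) := by ring
      _ = fb (k+1) m := rfl

lemma fb_le (m : ℕ) (hm : 1 ≤ m) : ∀ k : ℕ, fb k m ≤ (4*(k+1)*m)^k := by
  intro k
  induction k with
  | zero => simp [fb]
  | succ k ihk =>
    have hbase : 0 < 4*(k+1)*m := by
      apply Nat.mul_pos _ (by omega)
      omega
    have h1 : 1 ≤ (4*(k+1)*m)^k := Nat.one_le_pow _ _ hbase
    calc fb (k+1) m = m * (2*k+3) * (1 + fb k m) := rfl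
      _ ≤ m * (2*k+3) * ((4*(k+1)*m)^k + (4*(k+1)*m)^k) := by
          apply Nat.mul_le_mul_left
          omega
      _ = (2*(2*k+3)) * m * (4*(k+1)*m)^k := by ring
      _ ≤ (4*(k+2)) * m * (4*(k+2)*m)^k := by
          apply Nat.mul_le_mul
          · apply Nat.mul_le_mul_right
            omega
          · apply Nat.pow_le_pow_left
            apply Nat.mul_le_mul_right
            omega
      _ = (4*(k+1+1)*m)^(k+1) := by ring
 
lemma sq_le_two_pow_sq (m : ℕ) : m^2 ≤ 4^m := by
  have h := (Nat.lt_two_pow_self (n := m))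
  calc m^2 ≤ (2^m)^2 := Nat.pow_le_pow_left (le_of_lt h) 2
    _ = 4^m := by rw [← Nat.pow_mul, Nat.mul_comm, Nat.pow_mul]

lemma natineq (k m : ℕ) (hk : 2 ≤ k) (hm : 2 ≤ m) :
    (4*(k+1)*m)^k ≤ (k+2).factorial * 4^((k * m^(k-1))^(k-1)) := by
  rcases eq_or_lt_of_le hk with hk2 | hk3
  · -- k = 2
    subst hk2
    norm_num
    have h1 : (12 * m)^2 = 144 * m^2 := by ring
    rw [h1]
    have h3 : 4^(2*m) = 4^m * 4^m := by rw [← Nat.pow_add]; ring_nf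
    have h4 : m^2 ≤ 4^m := sq_le_two_pow_sq m
    have h5 : (6 : ℕ) ≤ 4^m := by
      calc (6:ℕ) ≤ 4^2 := by norm_num
        _ ≤ 4^m := Nat.pow_le_pow_right (by norm_num) hm
    calc 144 * m^2 ≤ 144 * 4^m := Nat.mul_le_mul_left _ h4
      _ ≤ 24 * (4^m * 4^m) := by nlinarith
      _ = 24 * 4^(2*m) := by rw [h3]
  · -- k ≥ 3
    have hk3' : 3 ≤ k := hk3
    have hb1 : 4*(k+1)*m ≤ 4^(k+1+m) := by
      have e1 : k+1 ≤ 2^k := (Nat.lt_two_pow_self (n := k))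
      have e2 : m ≤ 2^m := le_of_lt ((Nat.lt_two_pow_self (n := m)))
      calc 4*(k+1)*m ≤ 4*2^k*2^m := by
            apply Nat.mul_le_mul _ e2
            exact Nat.mul_le_mul_left _ e1
        _ ≤ 4^1 * 4^k * 4^m := by
            apply Nat.mul_le_mul _ (Nat.pow_le_pow_left (by norm_num) m)
            apply Nat.mul_le_mul (by norm_num) (Nat.pow_le_pow_left (by norm_num) k)
        _ = 4^(k+1+m) := by rw [← Nat.pow_add, ← Nat.pow_add]; ring_nf
    have hb2 : (4*(k+1)*m)^k ≤ 4^((k+1+m)*k) := by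
      calc (4*(k+1)*m)^k ≤ (4^(k+1+m))^k := Nat.pow_le_pow_left hb1 k
        _ = 4^((k+1+m)*k) := by rw [← Nat.pow_mul]
    -- exponent comparison
    have hexp : (k+1+m)*k ≤ (k * m^(k-1))^(k-1) := by
      have s1 : k+1+m ≤ m*(k+1) := by nlinarith
      have s2 : (k+1+m)*k ≤ k*m*(k+1) := by nlinarith
      have s3 : k*m*(k+1) ≤ 2*(k*m)*k := by nlinarith
      have s4 : 2*(k*m)*k ≤ (k*m)^2 := by nlinarith
      have s5 : (k*m)^2 ≤ (k*m^(k-1))^2 := by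
        apply Nat.pow_le_pow_left
        apply Nat.mul_le_mul_left
        exact Nat.le_self_pow (by omega) m
      have s6 : (k*m^(k-1))^2 ≤ (k*m^(k-1))^(k-1) := by
        apply Nat.pow_le_pow_right
        · have : 1 ≤ m^(k-1) := Nat.one_le_pow _ _ (by omega)
          nlinarith
        · omega
      omega
    calc (4*(k+1)*m)^k ≤ 4^((k+1+m)*k) := hb2
      _ ≤ 4^((k * m^(k-1))^(k-1)) := Nat.pow_le_pow_right (by norm_num) hexp
      _ ≤ (k+2).factorial * 4^((k * m^(k-1))^(k-1)) := by
          have h9 : 1 ≤ (k+2).factorial := Nat.one_le_iff_ne_zero.mpr (Nat.factorial_ne_zero _)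
          calc 4^((k * m^(k-1))^(k-1)) = 1 * 4^((k * m^(k-1))^(k-1)) := by ring
            _ ≤ (k+2).factorial * 4^((k * m^(k-1))^(k-1)) := Nat.mul_le_mul_right _ h9

lemma pow_collapse (k : ℕ) (hk : 2 ≤ k) (x : ℝ) (hx : 0 ≤ x) :
    (x ^ (k-1 : ℕ)) ^ ((1:ℝ) / ((k:ℝ) - 1)) = x := by
  have hcast : ((k-1 : ℕ) : ℝ) = (k:ℝ) - 1 := by
    push_cast [Nat.cast_sub (by omega : 1 ≤ k)]
    ring
  have hne : (k:ℝ) - 1 ≠ 0 := by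
    have : (2:ℝ) ≤ (k:ℝ) := by exact_mod_cast hk
    linarith
  rw [← Real.rpow_natCast x (k-1), ← Real.rpow_mul hx, hcast,
    mul_one_div_cancel hne, Real.rpow_one]

lemma final_real1 (k m n : ℕ) (hk : 2 ≤ k) (hn1 : (k+2).factorial ≤ n)
    (hbound : n ≤ (k+2).factorial * 4^((k * m^(k-1))^(k-1))) :
    ((Real.logb 2 ((n : ℝ) / ((k+2).factorial : ℕ)) / Real.logb 2 ((k : ℝ) + 2))
      ^ ((1 : ℝ) / ((k : ℝ) - 1)) / (k : ℝ)) ^ ((1 : ℝ) / ((k : ℝ) - 1)) ≤ (m : ℝ) := by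
  have hkR : (2:ℝ) ≤ (k:ℝ) := by exact_mod_cast hk
  set F : ℝ := (((k+2).factorial : ℕ) : ℝ) with hF
  have hF0 : 0 < F := by
    rw [hF]
    have := Nat.factorial_pos (k+2)
    exact_mod_cast this
  set T : ℕ := (k * m^(k-1))^(k-1) with hT
  have hq1 : (1:ℝ) ≤ (n:ℝ)/F := by
    rw [le_div_iff₀ hF0, one_mul, hF]
    exact_mod_cast hn1
  have hq2 : (n:ℝ)/F ≤ (4:ℝ)^T := by
    rw [div_le_iff₀ hF0]
    calc (n:ℝ) ≤ ((k+2).factorial * 4^T : ℕ) := by exact_mod_cast hbound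
      _ = (4:ℝ)^T * F := by push_cast; ring
  have hL0 : 0 ≤ Real.logb 2 ((n:ℝ)/F) := Real.logb_nonneg (by norm_num) hq1
  have hlog4 : Real.logb 2 (4:ℝ) = 2 := by
    rw [show (4:ℝ) = 2^(2:ℕ) by norm_num, Real.logb_pow,
      Real.logb_self_eq_one (by norm_num)]
    norm_num
  have hLT : Real.logb 2 ((n:ℝ)/F) ≤ 2*T := by
    calc Real.logb 2 ((n:ℝ)/F) ≤ Real.logb 2 ((4:ℝ)^T) :=
          Real.logb_le_logb_of_le (by norm_num) (by linarith) hq2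
      _ = T * Real.logb 2 (4:ℝ) := Real.logb_pow 2 4 T
      _ = 2*T := by rw [hlog4]; ring
  have hlogk : (2:ℝ) ≤ Real.logb 2 ((k:ℝ)+2) := by
    calc (2:ℝ) = Real.logb 2 (4:ℝ) := hlog4.symm
      _ ≤ Real.logb 2 ((k:ℝ)+2) :=
          Real.logb_le_logb_of_le (by norm_num) (by norm_num) (by linarith)
  set Y : ℝ := Real.logb 2 ((n:ℝ)/F) / Real.logb 2 ((k:ℝ)+2) with hY
  have hY0 : 0 ≤ Y := div_nonneg hL0 (by linarith)
  have hYT : Y ≤ (T:ℝ) := by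
    calc Y ≤ Real.logb 2 ((n:ℝ)/F) / 2 :=
          div_le_div_of_nonneg_left hL0 (by norm_num) hlogk
      _ ≤ (2*T)/2 := by linarith
      _ = (T:ℝ) := by ring
  have he0 : (0:ℝ) ≤ 1 / ((k:ℝ) - 1) := by
    apply div_nonneg (by norm_num)
    linarith
  have hk0 : (0:ℝ) < (k:ℝ) := by linarith
  have hcastT : (T:ℝ) = (((k * m^(k-1) : ℕ)):ℝ) ^ (k-1 : ℕ) := by
    rw [hT]; push_cast; ring
  have hX0 : (0:ℝ) ≤ ((k * m^(k-1) : ℕ) : ℝ) := by positivity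
  have step1 : Y ^ ((1:ℝ)/((k:ℝ)-1)) ≤ ((k * m^(k-1) : ℕ) : ℝ) := by
    calc Y ^ ((1:ℝ)/((k:ℝ)-1)) ≤ ((T:ℝ)) ^ ((1:ℝ)/((k:ℝ)-1)) :=
          Real.rpow_le_rpow hY0 hYT he0
      _ = ((k * m^(k-1) : ℕ) : ℝ) := by rw [hcastT, pow_collapse k hk _ hX0]
  have step2 : Y ^ ((1:ℝ)/((k:ℝ)-1)) / (k:ℝ) ≤ (m:ℝ)^(k-1 : ℕ) := by
    rw [div_le_iff₀ hk0]
    calc Y ^ ((1:ℝ)/((k:ℝ)-1)) ≤ ((k * m^(k-1) : ℕ) : ℝ) := step1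
      _ = (m:ℝ)^(k-1 : ℕ) * (k:ℝ) := by push_cast; ring
  calc (Y ^ ((1:ℝ)/((k:ℝ)-1)) / (k:ℝ)) ^ ((1:ℝ)/((k:ℝ)-1))
      ≤ ((m:ℝ)^(k-1 : ℕ)) ^ ((1:ℝ)/((k:ℝ)-1)) := by
        apply Real.rpow_le_rpow _ step2 he0
        exact div_nonneg (Real.rpow_nonneg hY0 _) (le_of_lt hk0)
    _ = (m:ℝ) := pow_collapse k hk _ (by positivity)

lemma final_real2 (k m n : ℕ) (hk : 2 ≤ k) (hm : 1 ≤ m) (hn : 2 ≤ n)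
    (hb : n ≤ (4*(k+1)*m)^k) :
    (1/(8*(k:ℝ)*((k:ℝ)+1))) * (Real.logb 2 (n:ℝ)) ^ ((1:ℝ) / (((k:ℝ) - 1)^2)) ≤ (m:ℝ) := by
  have hkR : (2:ℝ) ≤ (k:ℝ) := by exact_mod_cast hk
  have hmR : (1:ℝ) ≤ (m:ℝ) := by exact_mod_cast hm
  have hx1 : (1:ℝ) ≤ Real.logb 2 (n:ℝ) := by
    calc (1:ℝ) = Real.logb 2 2 := (Real.logb_self_eq_one (by norm_num)).symm
      _ ≤ Real.logb 2 (n:ℝ) :=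
          Real.logb_le_logb_of_le (by norm_num) (by norm_num) (by exact_mod_cast hn)
  have hδ : (1:ℝ) / (((k:ℝ) - 1)^2) ≤ 1 := by
    rw [div_le_one (by nlinarith)]
    nlinarith
  have h1 : (Real.logb 2 (n:ℝ)) ^ ((1:ℝ) / (((k:ℝ) - 1)^2)) ≤ Real.logb 2 (n:ℝ) := by
    calc (Real.logb 2 (n:ℝ)) ^ ((1:ℝ) / (((k:ℝ) - 1)^2))
        ≤ (Real.logb 2 (n:ℝ)) ^ (1:ℝ) := Real.rpow_le_rpow_of_exponent_le hx1 hδ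
      _ = Real.logb 2 (n:ℝ) := Real.rpow_one _
  -- logb 2 n ≤ 8 k (k+1) m
  have hyR : (1:ℝ) ≤ 4*((k:ℝ)+1)*(m:ℝ) := by nlinarith
  have h2 : Real.logb 2 (n:ℝ) ≤ (k:ℝ) * (2 * (4*((k:ℝ)+1)*(m:ℝ))) := by
    have hcast : ((4*(k+1)*m : ℕ) : ℝ) = 4*((k:ℝ)+1)*(m:ℝ) := by push_cast; ring
    have hl1 : Real.logb 2 (n:ℝ) ≤ Real.logb 2 (((4*(k+1)*m)^k : ℕ) : ℝ) :=
      Real.logb_le_logb_of_le (by norm_num) (by norm_num; omega) (by exact_mod_cast hb)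
    have hl2 : Real.logb 2 (((4*(k+1)*m)^k : ℕ) : ℝ) = (k:ℝ) * Real.logb 2 (4*((k:ℝ)+1)*(m:ℝ)) := by
      rw [show (((4*(k+1)*m)^k : ℕ) : ℝ) = ((4*(k+1)*m : ℕ) : ℝ)^k by push_cast; ring,
        Real.logb_pow, hcast]
    have hl3 : Real.logb 2 (4*((k:ℝ)+1)*(m:ℝ)) ≤ 2 * (4*((k:ℝ)+1)*(m:ℝ)) := by
      rw [Real.logb, div_le_iff₀ (Real.log_pos (by norm_num))]
      have hlog2 : (0.6931471803:ℝ) < Real.log 2 := Real.log_two_gt_d9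
      have hlogy : Real.log (4*((k:ℝ)+1)*(m:ℝ)) ≤ 4*((k:ℝ)+1)*(m:ℝ) := by
        calc Real.log (4*((k:ℝ)+1)*(m:ℝ)) ≤ 4*((k:ℝ)+1)*(m:ℝ) - 1 :=
              Real.log_le_sub_one_of_pos (by linarith)
          _ ≤ 4*((k:ℝ)+1)*(m:ℝ) := by linarith
      have hlogy0 : 0 ≤ Real.log (4*((k:ℝ)+1)*(m:ℝ)) := Real.log_nonneg hyR
      nlinarith
    calc Real.logb 2 (n:ℝ) ≤ (k:ℝ) * Real.logb 2 (4*((k:ℝ)+1)*(m:ℝ)) := by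
          rw [← hl2]; exact hl1
      _ ≤ (k:ℝ) * (2 * (4*((k:ℝ)+1)*(m:ℝ))) := by
          apply mul_le_mul_of_nonneg_left hl3 (by linarith)
  have hc0 : (0:ℝ) < 8*(k:ℝ)*((k:ℝ)+1) := by nlinarith
  rw [div_mul_eq_mul_div, one_mul, div_le_iff₀ hc0]
  calc (Real.logb 2 (n:ℝ)) ^ ((1:ℝ) / (((k:ℝ) - 1)^2)) ≤ Real.logb 2 (n:ℝ) := h1
    _ ≤ (k:ℝ) * (2 * (4*((k:ℝ)+1)*(m:ℝ))) := h2
    _ = (m:ℝ) * (8*(k:ℝ)*((k:ℝ)+1)) := by ring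


lemma build_ip (G : SimpleGraph V) (l r : V → ℝ)
    (hadj : ∀ v w : V, v ≠ w → (G.Adj v w ↔ Isect l r v w)) (L : List V)
    (hC : Chordless l r L) : HasInducedPathOfSize G L.length := by
  have hinj : Function.Injective L.get := List.nodup_iff_injective_get.mp hC.1
  set S : Set V := Set.range L.get with hS
  have hncard : S.ncard = L.length := by
    rw [hS, ← Nat.card_coe_set_eq, Nat.card_range_of_injective hinj, Nat.card_eq_fintype_card,
      Fintype.card_fin]
  have key : ∀ i j : Fin L.length, G.Adj (L.get i) (L.get j) ↔ ((i:ℕ)+1 = (j:ℕ) ∨ (j:ℕ)+1 = (i:ℕ)) := by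
    intro i j
    constructor
    · intro hA
      have hne : i ≠ j := fun h => hA.ne (by rw [h])
      by_contra hcon
      push_neg at hcon
      have hI : Isect l r (L.get i) (L.get j) :=
        (hadj _ _ (fun h => hne (hinj h))).mp hA
      rcases lt_trichotomy (i:ℕ) (j:ℕ) with h | h | h
      · have h2 : (i:ℕ) + 2 ≤ (j:ℕ) := by omega
        exact hC.2.2 i j i.isLt j.isLt h2 hI
      · exact hne (Fin.ext h)
      · have h2 : (j:ℕ) + 2 ≤ (i:ℕ) := by omega
        exact hC.2.2 j i j.isLt i.isLt h2 ⟨hI.2, hI.1⟩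
    · intro h
      have hchain := List.isChain_iff_getElem.mp hC.2.1
      rcases h with h | h
      · have hI : Isect l r (L.get i) (L.get j) := by
          have h1 := hchain (i:ℕ) (by omega)
          have hj' : j = ⟨(i:ℕ)+1, by omega⟩ := Fin.ext (by simp [← h])
          rw [hj']
          exact h1
        exact (hadj _ _ (fun hE => by have := hinj hE; omega)).mpr hI
      · have hI : Isect l r (L.get j) (L.get i) := by
          have h1 := hchain (j:ℕ) (by omega)
          have hi' : i = ⟨(j:ℕ)+1, by omega⟩ := Fin.ext (by simp [← h])
          rw [hi']
          exact h1
        exact (hadj _ _ (fun hE => by have := hinj hE; omega)).mpr ⟨hI.2, hI.1⟩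
  refine ⟨S, hncard, ⟨?_⟩⟩
  refine (SimpleGraph.Iso.symm ⟨Equiv.ofInjective L.get hinj, ?_⟩)
  intro i j
  have hval : ∀ x : Fin L.length, ((Equiv.ofInjective L.get hinj x : S) : V) = L.get x := by
    intro x
    simp [Equiv.ofInjective_apply]
  show (G.induce S).Adj (Equiv.ofInjective L.get hinj i) (Equiv.ofInjective L.get hinj j) ↔
    (pathGraph L.length).Adj i j
  rw [pathGraph_adj]
  have hadj' : (G.induce S).Adj (Equiv.ofInjective L.get hinj i) (Equiv.ofInjective L.get hinj j)
      ↔ G.Adj (L.get i) (L.get j) := by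
    rw [show (G.induce S).Adj (Equiv.ofInjective L.get hinj i) (Equiv.ofInjective L.get hinj j)
        ↔ G.Adj ((Equiv.ofInjective L.get hinj i : S) : V) ((Equiv.ofInjective L.get hinj j : S) : V)
      from Iff.rfl, hval i, hval j]
  rw [hadj']
  exact key i j

end IGIP

/-- Theorem 12 (paper): let `k ≥ 2`. Every interval graph on `n ≥ (k+2)!` vertices
with maximum clique size `k` containing a Hamiltonian path contains an induced path of
size at least `((log (n/(k+2)!) / log (k+2))^(1/(k-1)) / k)^(1/(k-1))`; in particular
there is a constant `c_k > 0`, depending only on `k`, such that such a graph contains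
an induced path of size at least `c_k (log n)^(1/(k-1)²)` (logarithms in base 2). -/
theorem interval_graph_induced_path (k : ℕ) (hk : 2 ≤ k) :
    ∃ c : ℝ, 0 < c ∧
      ∀ (V : Type) [Fintype V] (G : SimpleGraph V) (l r : V → ℝ),
        IsIntervalRep G l r →
        ∀ n : ℕ, Fintype.card V = n → Nat.factorial (k + 2) ≤ n →
        MaxCliqueSize G k →
        (∃ (u v : V) (p : G.Walk u v), p.IsPath ∧ ∀ w : V, w ∈ p.support) →
        (∃ m : ℕ, HasInducedPathOfSize G m ∧
          ((Real.logb 2 ((n : ℝ) / (Nat.factorial (k + 2))) / Real.logb 2 (k + 2))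
              ^ ((1 : ℝ) / ((k : ℝ) - 1)) / (k : ℝ)) ^ ((1 : ℝ) / ((k : ℝ) - 1))
            ≤ (m : ℝ)) ∧
        (∃ m : ℕ, HasInducedPathOfSize G m ∧
          c * (Real.logb 2 (n : ℝ)) ^ ((1 : ℝ) / (((k : ℝ) - 1) ^ 2)) ≤ (m : ℝ)) := by
  classical
  refine ⟨1/(8*(k:ℝ)*((k:ℝ)+1)), by positivity, ?_⟩
  intro V _ G l r hrep n hcard hfac hclq hham
  obtain ⟨hlr, injl, injr, hlrne, hadj⟩ := hrep
  have hadj' : ∀ v w : V, v ≠ w → (G.Adj v w ↔ IGIP.Isect l r v w) := hadj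
  obtain ⟨u, v, p, hp, hsupp⟩ := hham
  set L : List V := p.support with hL
  have hnd : L.Nodup := hp.support_nodup
  have htf : L.toFinset = (Finset.univ : Finset V) := by
    ext x
    simp [hsupp x]
  have hch : L.Chain' (IGIP.Isect l r) := by
    apply List.IsChain.imp _ p.isChain_adj_support
    intro a b hab
    exact (hadj a b hab.ne).mp hab
  have hdep : ∀ x : ℝ, ((Finset.univ : Finset V).filter fun w => l w ≤ x ∧ x ≤ r w).card ≤ k := by
    intro x
    apply hclq.2 _ ((Finset.univ : Finset V).filter fun w => l w ≤ x ∧ x ≤ r w)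
    constructor
    · intro a ha b hb hab
      have ha' := (Finset.mem_filter.mp ha).2
      have hb' := (Finset.mem_filter.mp hb).2
      exact (hadj a b hab).mpr ⟨le_trans ha'.1 hb'.2, le_trans hb'.1 ha'.2⟩
    · rfl
  have hLlen : L.length = n := by
    rw [← List.toFinset_card_of_nodup hnd, htf, Finset.card_univ, hcard]
  have hn2 : 2 ≤ n := by
    have h24 : 24 ≤ (k+2).factorial := by
      calc 24 = Nat.factorial 4 := by norm_num [Nat.factorial]
        _ ≤ (k+2).factorial := Nat.factorial_le (by omega)
    omega
  -- the longest chordless list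
  set Pq : ℕ → Prop := fun t => ∃ C : List V, IGIP.Chordless l r C ∧ C.length = t with hPq
  have hPlen : ∀ C : List V, IGIP.Chordless l r C → C.length ≤ n := by
    intro C hC
    have := hC.1.length_le_card
    omega
  have hPq2 : Pq 2 := by
    have h0 : 0 < L.length := by omega
    have h1 : 1 < L.length := by omega
    set a := L.get ⟨0, h0⟩ with ha
    set b := L.get ⟨1, h1⟩ with hb
    have hab : IGIP.Isect l r a b := List.isChain_iff_getElem.mp hch 0 (by omega)
    have hne2 : a ≠ b := by
      intro h
      have := List.nodup_iff_injective_get.mp hnd h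
      simp at this
    refine ⟨[a, b], ⟨?_, ?_, ?_⟩, rfl⟩
    · simp [hne2]
    · exact List.isChain_cons_cons.mpr ⟨hab, List.isChain_singleton _⟩
    · intro i j hi hj hij
      simp at hj
      omega
  set m : ℕ := Nat.findGreatest Pq n with hm
  have hm2 : 2 ≤ m := Nat.le_findGreatest hn2 hPq2
  have hmax : ∀ C : List V, IGIP.Chordless l r C → C.length ≤ m := by
    intro C hC
    exact Nat.le_findGreatest (hPlen C hC) ⟨C, hC, rfl⟩
  have hPm : Pq m := Nat.findGreatest_spec hn2 hPq2
  obtain ⟨C0, hC0, hC0len⟩ := hPm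
  have hIP : HasInducedPathOfSize G m := by
    rw [← hC0len]
    exact IGIP.build_ip G l r hadj' C0 hC0
  have hcore : n ≤ IGIP.fb k m := by
    have := IGIP.core l r hlr injl injr k m Finset.univ L hnd htf hch hdep
      (fun C hC _ => hmax C hC)
    rwa [Finset.card_univ, hcard] at this
  have hfb : IGIP.fb k m ≤ (4*(k+1)*m)^k := IGIP.fb_le m (by omega) k
  have hnb : n ≤ (4*(k+1)*m)^k := le_trans hcore hfb
  refine ⟨⟨m, hIP, ?_⟩, ⟨m, hIP, ?_⟩⟩
  · have hnat : n ≤ (k+2).factorial * 4^((k * m^(k-1))^(k-1)) :=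
      le_trans hnb (IGIP.natineq k m hk hm2)
    exact IGIP.final_real1 k m n hk hfac hnat
  · exact IGIP.final_real2 k m n hk (by omega) hn2 hnb
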